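/- Let K be an algebraically closed field equipped with a surjective Krull valuation val : K → Γ ∪ {∞} and let f be a nonzero Laurent polynomial in N variables over K. Then every point of the hypersurface associated to the tropicalization of f is the value of a zero of f: for every γ ∈ Γ^N such that the minimum min_{α ∈ E(f)} (val(φ_α) + α·γ) is attained for at least two distinct exponents α, there exists x ∈ (K∖{0})^N with f(x) = 0 and (val(x_1),…,val(x_N)) = γ. That is, V(Tf) ⊆ TV(f). -/

import Mathlib

open Finset Pointwise

/-- The tropical dot product `α·γ = ∑ i, α i • γ i`. -/
noncomputable def tropDot {Γ : Type*} [AddCommGroup Γ] [LinearOrder Γ] [IsOrderedAddMonoid Γ] {N : ℕ}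
    (α : Fin N → ℤ) (γ : Fin N → Γ) : Γ :=
  ∑ i, α i • γ i

/-- The tropicalization of a Laurent polynomial `f` (an element of the group algebra
`K[ℤ^N]`), evaluated at `γ ∈ Γ^N`:  `Tf(γ) = min_{α ∈ E(f)} (val φ_α + α·γ)`,
computed in `Γ ∪ {∞}` (the min over the empty set is `∞`). -/
noncomputable def tropicalize {Γ : Type*} [AddCommGroup Γ] [LinearOrder Γ] [IsOrderedAddMonoid Γ]
    {K : Type*} [Field K] {N : ℕ} (val : K → WithTop Γ)
    (f : AddMonoidAlgebra K (Fin N → ℤ)) (γ : Fin N → Γ) : WithTop Γ :=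
  f.coeff.support.inf fun α => val (f.coeff α) + WithTop.some (tropDot α γ)

/-- `D_γ(Tf)`: the set of exponents of `f` at which the minimum defining `Tf(γ)`
is attained. -/
def tropD {Γ : Type*} [AddCommGroup Γ] [LinearOrder Γ] [IsOrderedAddMonoid Γ] {K : Type*} [Field K] {N : ℕ}
    (val : K → WithTop Γ) (f : AddMonoidAlgebra K (Fin N → ℤ))
    (γ : Fin N → Γ) : Set (Fin N → ℤ) :=
  {α | α ∈ f.coeff.support ∧ tropicalize val f γ = val (f.coeff α) + WithTop.some (tropDot α γ)}

/-- `V(Tf)`: the hypersurface associated to the tropicalization of `f`,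
i.e. the points `γ` where the minimum is attained at least twice. -/
def tropV {Γ : Type*} [AddCommGroup Γ] [LinearOrder Γ] [IsOrderedAddMonoid Γ] {K : Type*} [Field K] {N : ℕ}
    (val : K → WithTop Γ) (f : AddMonoidAlgebra K (Fin N → ℤ)) :
    Set (Fin N → Γ) :=
  {γ | ∃ α β : Fin N → ℤ, α ≠ β ∧ α ∈ tropD val f γ ∧ β ∈ tropD val f γ}

/-- Evaluation of a Laurent polynomial at a point of the torus `(K∖{0})^N`:
`f(x) = ∑_{α ∈ E(f)} φ_α x^α`. -/
noncomputable def lEval {K : Type*} [Field K] {N : ℕ}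
    (f : AddMonoidAlgebra K (Fin N → ℤ)) (x : Fin N → Kˣ) : K :=
  ∑ α ∈ f.coeff.support, f.coeff α * ((∏ i, (x i) ^ (α i) : Kˣ) : K)

section Aux
set_option linter.unusedSectionVars false
open Polynomial
section ValLemmas
variable {Γ : Type*} [AddCommGroup Γ] [LinearOrder Γ] [IsOrderedAddMonoid Γ] {K : Type*} [Field K]
  (val : K → WithTop Γ)
  (hval0 : ∀ x : K, val x = ⊤ ↔ x = 0)
  (hvalmul : ∀ x y : K, val (x * y) = val x + val y)
  (hvaladd : ∀ x y : K, min (val x) (val y) ≤ val (x + y))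

include hval0 hvalmul in
lemma val_one' : val 1 = 0 := by
  have h1 : val 1 ≠ ⊤ := by simp [hval0]
  obtain ⟨g, hg⟩ := WithTop.ne_top_iff_exists.mp h1
  have := hvalmul 1 1
  rw [mul_one, ← hg, ← WithTop.coe_add] at this
  have : g = g + g := by exact_mod_cast this
  have hg0 : g = 0 := by
    have : g + 0 = g + g := by rw [add_zero]; exact this
    exact (add_left_cancel this).symm
  rw [← hg, hg0]; rfl

include hval0 hvalmul in
lemma val_neg' (x : K) : val (-x) = val x := by
  have hm1 : val (-1 : K) = 0 := by
    have h1 : val (-1 : K) ≠ ⊤ := by simp [hval0]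
    obtain ⟨g, hg⟩ := WithTop.ne_top_iff_exists.mp h1
    have := hvalmul (-1) (-1)
    rw [neg_mul_neg, one_mul, val_one' val hval0 hvalmul, ← hg, ← WithTop.coe_add] at this
    have h2 : g + g = 0 := by exact_mod_cast this.symm
    have hg0 : g = 0 := by
      rcases lt_trichotomy g 0 with h | h | h
      · exact absurd h2 (by have := add_lt_add h h; rw [add_zero] at this; exact ne_of_lt this)
      · exact h
      · exact absurd h2 (by have := add_lt_add h h; rw [add_zero] at this; exact ne_of_gt this)
    rw [← hg, hg0]; rfl
  calc val (-x) = val ((-1) * x) := by ring_nf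
    _ = val (-1) + val x := hvalmul _ _
    _ = val x := by rw [hm1, zero_add]

include hval0 hvalmul hvaladd in
lemma val_add_eq_left' {x y : K} (h : val x < val y) : val (x + y) = val x := by
  refine le_antisymm ?_ ?_
  · by_contra hlt
    push_neg at hlt
    have h1 := hvaladd (x + y) (-y)
    rw [add_neg_cancel_right] at h1
    have h2 : val x < min (val (x + y)) (val (-y)) :=
      lt_min hlt (by rw [val_neg' val hval0 hvalmul]; exact h)
    exact absurd h1 (not_le.mpr h2)
  · calc val x = min (val x) (val y) := (min_eq_left h.le).symm
      _ ≤ val (x + y) := hvaladd x y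

include hval0 in
lemma val_zero' : val (0 : K) = ⊤ := (hval0 0).mpr rfl

include hval0 hvaladd in
lemma le_val_sum' {ι : Type*} {s : Finset ι} {g : ι → K} {c : WithTop Γ}
    (h : ∀ j ∈ s, c ≤ val (g j)) : c ≤ val (∑ j ∈ s, g j) := by
  classical
  induction s using Finset.cons_induction with
  | empty => simp [val_zero' val hval0]
  | cons a s ha ih =>
    rw [Finset.sum_cons]
    refine le_trans ?_ (hvaladd _ _)
    exact le_min (h a (Finset.mem_cons_self a s)) (ih fun j hj => h j (Finset.mem_cons_of_mem hj))

include hval0 hvaladd in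
lemma lt_val_sum' {ι : Type*} {s : Finset ι} {g : ι → K} {c : WithTop Γ} (hc : c ≠ ⊤)
    (h : ∀ j ∈ s, c < val (g j)) : c < val (∑ j ∈ s, g j) := by
  classical
  induction s using Finset.cons_induction with
  | empty => simpa [val_zero' val hval0] using lt_top_iff_ne_top.mpr hc
  | cons a s ha ih =>
    rw [Finset.sum_cons]
    refine lt_of_lt_of_le ?_ (hvaladd _ _)
    exact lt_min (h a (Finset.mem_cons_self a s)) (ih fun j hj => h j (Finset.mem_cons_of_mem hj))

include hval0 hvalmul hvaladd in
lemma val_sum_eq' {ι : Type*} [DecidableEq ι] {s : Finset ι} {g : ι → K} {i₀ : ι} (hi₀ : i₀ ∈ s)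
    (h : ∀ j ∈ s, j ≠ i₀ → val (g i₀) < val (g j)) :
    val (∑ j ∈ s, g j) = val (g i₀) := by
  rw [← Finset.add_sum_erase s g hi₀]
  by_cases htop : val (g i₀) = ⊤
  · have he : s.erase i₀ = ∅ := by
      refine Finset.eq_empty_of_forall_notMem fun j hj => ?_
      have := h j (Finset.mem_of_mem_erase hj) (Finset.ne_of_mem_erase hj)
      rw [htop] at this
      exact absurd this (not_top_lt)
    simp [he]
  · have hr : val (g i₀) < val (∑ j ∈ s.erase i₀, g j) :=
      lt_val_sum' val hval0 hvaladd htop fun j hj =>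
        h j (Finset.mem_of_mem_erase hj) (Finset.ne_of_mem_erase hj)
    exact val_add_eq_left' val hval0 hvalmul hvaladd hr

include hval0 hvalmul in
lemma val_prod' {ι : Type*} (s : Finset ι) (g : ι → K) :
    val (∏ j ∈ s, g j) = ∑ j ∈ s, val (g j) := by
  classical
  induction s using Finset.cons_induction with
  | empty => simp [val_one' val hval0 hvalmul]
  | cons a s ha ih => rw [Finset.prod_cons, Finset.sum_cons, hvalmul, ih]

include hval0 hvalmul in
lemma val_unit_inv' (x : Kˣ) {g : Γ} (hg : val (x : K) = WithTop.some g) :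
    val ((x⁻¹ : Kˣ) : K) = WithTop.some (-g) := by
  have h1 : val ((x : K) * ((x⁻¹ : Kˣ) : K)) = 0 := by
    rw [Units.mul_inv]; exact val_one' val hval0 hvalmul
  rw [hvalmul, hg] at h1
  have hne : val ((x⁻¹ : Kˣ) : K) ≠ ⊤ := by simp [hval0]
  obtain ⟨h, hh⟩ := WithTop.ne_top_iff_exists.mp hne
  rw [← hh, ← WithTop.coe_add] at h1
  have h2 : g + h = 0 := by exact_mod_cast h1
  rw [← hh, eq_neg_of_add_eq_zero_right h2]

include hval0 hvalmul in
lemma val_unit_pow' (x : Kˣ) {g : Γ} (hg : val (x : K) = WithTop.some g) (k : ℕ) :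
    val ((x ^ k : Kˣ) : K) = WithTop.some (k • g) := by
  induction k with
  | zero => simpa using val_one' val hval0 hvalmul
  | succ k ih =>
    have : ((x ^ (k+1) : Kˣ) : K) = ((x ^ k : Kˣ) : K) * (x : K) := by
      push_cast [pow_succ]; ring
    rw [this, hvalmul, ih, hg, ← WithTop.coe_add, succ_nsmul]

include hval0 hvalmul in
lemma val_unit_zpow' (x : Kˣ) {g : Γ} (hg : val (x : K) = WithTop.some g) (n : ℤ) :
    val ((x ^ n : Kˣ) : K) = WithTop.some (n • g) := by
  rcases n with k | k
  · simpa using val_unit_pow' val hval0 hvalmul x hg k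
  · rw [zpow_negSucc]
    rw [val_unit_inv' val hval0 hvalmul _ (val_unit_pow' val hval0 hvalmul x hg (k+1))]
    congr 1
    rw [Int.negSucc_eq]
    push_cast
    rw [neg_smul]
    congr 1
    exact_mod_cast (natCast_zsmul g (k+1)).symm

include hval0 hvalmul hvaladd in
lemma val_sub_ge' (x y : K) : min (val x) (val y) ≤ val (x - y) := by
  rw [sub_eq_add_neg]
  refine le_trans (le_of_eq ?_) (hvaladd x (-y))
  rw [val_neg' val hval0 hvalmul]

include hval0 hvalmul hvaladd in
lemma lemA' : ∀ (S : Multiset K), (∀ r ∈ S, val r < 0) →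
    val (((S.map fun r => X - C r).prod).coeff 0) = (S.map val).sum ∧
    (S.map val).sum ≠ ⊤ ∧
    ∀ i : ℕ, i ≠ 0 → (S.map val).sum < val (((S.map fun r => X - C r).prod).coeff i) := by
  intro S
  induction S using Multiset.induction_on with
  | empty =>
    intro _
    refine ⟨by simpa using val_one' val hval0 hvalmul, by simp, fun i hi => ?_⟩
    simp only [Multiset.map_zero, Multiset.prod_zero, Multiset.sum_zero]
    have : (1 : Polynomial K).coeff i = 0 := by
      rw [Polynomial.coeff_one]; simp [hi]
    rw [this, val_zero' val hval0]
    exact WithTop.coe_lt_top 0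
  | cons r S ih =>
    intro hall
    have hr : val r < 0 := hall r (Multiset.mem_cons_self r S)
    have hS : ∀ t ∈ S, val t < 0 := fun t ht => hall t (Multiset.mem_cons_of_mem ht)
    obtain ⟨ih0, ihtop, ihpos⟩ := ih hS
    set A := ((S.map fun r => X - C r).prod) with hA
    have hprod : (((r ::ₘ S).map fun r => X - C r).prod) = (X - C r) * A := by
      rw [Multiset.map_cons, Multiset.prod_cons]
    have hsum : ((r ::ₘ S).map val).sum = val r + (S.map val).sum := by
      rw [Multiset.map_cons, Multiset.sum_cons]
    have hrtop : val r ≠ ⊤ := ne_top_of_lt hr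
    have hWtop : val r + (S.map val).sum ≠ ⊤ := WithTop.add_ne_top.mpr ⟨hrtop, ihtop⟩
    have hWlt : val r + (S.map val).sum < (S.map val).sum := by
      have := WithTop.add_lt_add_right ihtop hr
      rwa [zero_add] at this
    have hcoeff : ∀ n : ℕ, ((X - C r) * A).coeff (n + 1) = A.coeff n - r * A.coeff (n + 1) := by
      intro n
      rw [sub_mul, Polynomial.coeff_sub, Polynomial.coeff_X_mul, Polynomial.coeff_C_mul]
    refine ⟨?_, by rw [hsum]; exact hWtop, ?_⟩
    · rw [hprod, hsum, Polynomial.mul_coeff_zero]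
      rw [hvalmul, Polynomial.coeff_sub, Polynomial.coeff_X_zero, Polynomial.coeff_C, if_pos rfl,
        zero_sub, val_neg' val hval0 hvalmul, ih0]
    · intro i hi
      obtain ⟨j, rfl⟩ := Nat.exists_eq_succ_of_ne_zero hi
      rw [hprod, hsum, hcoeff]
      refine lt_of_lt_of_le ?_ (val_sub_ge' val hval0 hvalmul hvaladd _ _)
      refine lt_min ?_ ?_
      · refine lt_of_lt_of_le hWlt ?_
        rcases Nat.eq_zero_or_pos j with hj | hj
        · rw [hj, ih0]
        · exact le_of_lt (ihpos j (Nat.pos_iff_ne_zero.mp hj))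
      · rw [hvalmul]
        exact WithTop.add_lt_add_left hrtop (ihpos (j+1) (Nat.succ_ne_zero j))

include hval0 hvalmul hvaladd in
lemma lemB' : ∀ (S : Multiset K), (∀ r ∈ S, 0 < val r) →
    (((S.map fun r => X - C r).prod).coeff (Multiset.card S) = 1) ∧
    (∀ i : ℕ, Multiset.card S < i → ((S.map fun r => X - C r).prod).coeff i = 0) ∧
    ∀ i : ℕ, i ≠ Multiset.card S → 0 < val (((S.map fun r => X - C r).prod).coeff i) := by
  intro S
  induction S using Multiset.induction_on with
  | empty =>
    refine fun _ => ⟨by simp, fun i hi => ?_, fun i hi => ?_⟩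
    · simp only [Multiset.card_zero] at hi
      simp only [Multiset.map_zero, Multiset.prod_zero]
      rw [Polynomial.coeff_one]
      simp [Nat.pos_iff_ne_zero.mp hi]
    · simp only [Multiset.card_zero] at hi
      simp only [Multiset.map_zero, Multiset.prod_zero]
      have : (1 : Polynomial K).coeff i = 0 := by
        rw [Polynomial.coeff_one]; simp [hi]
      rw [this, val_zero' val hval0]
      exact WithTop.coe_lt_top 0
  | cons r S ih =>
    intro hall
    have hr : 0 < val r := hall r (Multiset.mem_cons_self r S)
    have hS : ∀ t ∈ S, 0 < val t := fun t ht => hall t (Multiset.mem_cons_of_mem ht)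
    obtain ⟨ihtop, ihzero, ihpos⟩ := ih hS
    set B := ((S.map fun r => X - C r).prod) with hB
    have hprod : (((r ::ₘ S).map fun r => X - C r).prod) = (X - C r) * B := by
      rw [Multiset.map_cons, Multiset.prod_cons]
    have hcard : Multiset.card (r ::ₘ S) = Multiset.card S + 1 := Multiset.card_cons r S
    have hcoeff : ∀ n : ℕ, ((X - C r) * B).coeff (n + 1) = B.coeff n - r * B.coeff (n + 1) := by
      intro n
      rw [sub_mul, Polynomial.coeff_sub, Polynomial.coeff_X_mul, Polynomial.coeff_C_mul]
    have hge : ∀ n : ℕ, 0 ≤ val (B.coeff n) := by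
      intro n
      by_cases hn : n = Multiset.card S
      · rw [hn, ihtop, val_one' val hval0 hvalmul]
      · exact le_of_lt (ihpos n hn)
    refine ⟨?_, ?_, ?_⟩
    · rw [hprod, hcard, hcoeff, ihtop, ihzero _ (Nat.lt_succ_self _), mul_zero, sub_zero]
    · intro i hi
      rw [hcard] at hi
      obtain ⟨j, rfl⟩ : ∃ j, i = j + 1 := ⟨i - 1, by omega⟩
      rw [hprod, hcoeff, ihzero j (by omega), ihzero (j+1) (by omega), mul_zero, sub_zero]
    · intro i hi
      rw [hcard] at hi
      rcases Nat.eq_zero_or_pos i with hi0 | hipos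
      · subst hi0
        rw [hprod, Polynomial.mul_coeff_zero, hvalmul, Polynomial.coeff_sub,
          Polynomial.coeff_X_zero, Polynomial.coeff_C, if_pos rfl, zero_sub,
          val_neg' val hval0 hvalmul]
        calc (0 : WithTop Γ) < val r := hr
          _ = val r + 0 := (add_zero _).symm
          _ ≤ val r + val (B.coeff 0) := add_le_add_right (hge 0) _
      · obtain ⟨j, rfl⟩ : ∃ j, i = j + 1 := ⟨i - 1, by omega⟩
        rw [hprod, hcoeff]
        refine lt_of_lt_of_le ?_ (val_sub_ge' val hval0 hvalmul hvaladd _ _)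
        refine lt_min (ihpos j (by omega)) ?_
        rw [hvalmul]
        calc (0 : WithTop Γ) < val r := hr
          _ = val r + 0 := (add_zero _).symm
          _ ≤ val r + val (B.coeff (j+1)) := add_le_add_right (hge (j+1)) _

include hval0 hvalmul hvaladd in
lemma exists_root_val_zero' [IsAlgClosed K] (p : Polynomial K) {j1 j2 : ℕ} (h12 : j1 ≠ j2)
    (hmin1 : ∀ j, val (p.coeff j1) ≤ val (p.coeff j))
    (hmin2 : ∀ j, val (p.coeff j2) ≤ val (p.coeff j))
    (h1 : p.coeff j1 ≠ 0) :
    ∃ r : K, p.eval r = 0 ∧ val r = 0 := by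
  classical
  have hp : p ≠ 0 := fun h => h1 (by simp [h])
  by_contra hno
  push_neg at hno
  have hroot : ∀ r ∈ p.roots, val r ≠ 0 := by
    intro r hr
    exact hno r ((Polynomial.mem_roots hp).mp hr)
  set P := p.roots.filter (fun r => val r < 0) with hPdef
  set Q := p.roots.filter (fun r => ¬ (val r < 0)) with hQdef
  have hPQ : P + Q = p.roots := Multiset.filter_add_not _ _
  have hPlt : ∀ r ∈ P, val r < 0 := fun r hr => (Multiset.mem_filter.mp hr).2
  have hQgt : ∀ r ∈ Q, 0 < val r := by
    intro r hr
    obtain ⟨hrR, hrn⟩ := Multiset.mem_filter.mp hr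
    exact lt_of_le_of_ne (not_lt.mp hrn) (Ne.symm (hroot r hrR))
  set A := ((P.map fun r => X - C r).prod) with hAdef
  set B := ((Q.map fun r => X - C r).prod) with hBdef
  obtain ⟨hA0, hWtop, hApos⟩ := lemA' val hval0 hvalmul hvaladd P hPlt
  obtain ⟨hBtop, hBzero, hBpos⟩ := lemB' val hval0 hvalmul hvaladd Q hQgt
  set W := (P.map val).sum with hWdef
  set b := Multiset.card Q with hbdef
  have hBge : ∀ n : ℕ, 0 ≤ val (B.coeff n) := by
    intro n
    by_cases hn : n = b
    · rw [hn, hBtop, val_one' val hval0 hvalmul]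
    · exact le_of_lt (hBpos n hn)
  have peq : p = C p.leadingCoeff * (A * B) := by
    conv_lhs => rw [(IsAlgClosed.splits p).eq_prod_roots]
    rw [← hPQ, Multiset.map_add, Multiset.prod_add]
  -- value of (A*B).coeff b
  have hABb : val ((A * B).coeff b) = W := by
    rw [Polynomial.coeff_mul]
    have h0b : ((0 : ℕ), b) ∈ Finset.HasAntidiagonal.antidiagonal b := by
      simp
    have := val_sum_eq' val hval0 hvalmul hvaladd (g := fun x => A.coeff x.1 * B.coeff x.2)
      h0b ?_
    · rw [this, hvalmul, hA0, hBtop, val_one' val hval0 hvalmul, add_zero]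
    · rintro ⟨i, j⟩ hij hne
      rw [Finset.HasAntidiagonal.mem_antidiagonal] at hij
      have hi : i ≠ 0 := by
        rintro rfl
        exact hne (by simp at hij; simp [hij])
      have hj : j ≠ b → True := fun _ => trivial
      rw [hvalmul, hvalmul, hA0, hBtop, val_one' val hval0 hvalmul, add_zero]
      calc W < val (A.coeff i) := hApos i hi
        _ = val (A.coeff i) + 0 := (add_zero _).symm
        _ ≤ val (A.coeff i) + val (B.coeff j) := add_le_add_right (hBge j) _
  have hABk : ∀ k : ℕ, k ≠ b → W < val ((A * B).coeff k) := by
    intro k hk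
    rw [Polynomial.coeff_mul]
    refine lt_val_sum' val hval0 hvaladd hWtop ?_
    rintro ⟨i, j⟩ hij
    rw [Finset.HasAntidiagonal.mem_antidiagonal] at hij
    rw [hvalmul]
    by_cases hi : i = 0
    · subst hi
      simp only [zero_add] at hij
      subst hij
      rw [hA0]
      have : W + 0 < W + val (B.coeff j) :=
        WithTop.add_lt_add_left hWtop (hBpos j hk)
      rwa [add_zero] at this
    · calc W < val (A.coeff i) := hApos i hi
        _ = val (A.coeff i) + 0 := (add_zero _).symm
        _ ≤ val (A.coeff i) + val (B.coeff j) := add_le_add_right (hBge j) _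
  have hlc : p.leadingCoeff ≠ 0 := Polynomial.leadingCoeff_ne_zero.mpr hp
  have hlctop : val p.leadingCoeff ≠ ⊤ := fun h => hlc ((hval0 _).mp h)
  have hkey : ∀ k : ℕ, k ≠ b → val (p.coeff b) < val (p.coeff k) := by
    intro k hk
    have hcoeff : ∀ n : ℕ, p.coeff n = p.leadingCoeff * (A * B).coeff n := by
      intro n
      conv_lhs => rw [peq]
      rw [Polynomial.coeff_C_mul]
    rw [hcoeff, hcoeff, hvalmul, hvalmul, hABb]
    exact WithTop.add_lt_add_left hlctop (hABk k hk)
  have hj1 : j1 = b := by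
    by_contra hne
    exact absurd (hmin1 b) (not_le.mpr (hkey j1 hne))
  have hj2 : j2 = b := by
    by_contra hne
    exact absurd (hmin2 b) (not_le.mpr (hkey j2 hne))
  exact h12 (hj1.trans hj2.symm)

end ValLemmas

lemma exists_separating {N : ℕ} :
    ∀ (S : Finset (Fin N → ℤ)), (∀ v ∈ S, v ≠ 0) →
    ∃ u : Fin N → ℤ, ∀ v ∈ S, (∑ i, v i * u i) ≠ 0 := by
  classical
  intro S
  induction S using Finset.induction_on with
  | empty => exact fun _ => ⟨0, by simp⟩
  | @insert w S hwS ih =>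
    intro hS
    obtain ⟨u, hu⟩ := ih (fun v hv => hS v (Finset.mem_insert_of_mem hv))
    have hw0 : w ≠ 0 := hS w (Finset.mem_insert_self w S)
    obtain ⟨j, hj⟩ := Function.ne_iff.mp hw0
    simp only [Pi.zero_apply] at hj
    set u₀ : Fin N → ℤ := Pi.single j 1 with hu₀
    have hd : ∀ v : Fin N → ℤ, (∑ i, v i * u₀ i) = v j := by
      intro v
      rw [hu₀, Finset.sum_eq_single j]
      · simp
      · intro i _ hij; simp [Pi.single_apply, hij]
      · simp
    set B := (insert w S).image (fun v => (-(∑ i, v i * u i)) / (v j)) with hB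
    obtain ⟨k, hk⟩ := Infinite.exists_notMem_finset B
    refine ⟨fun i => u i + k * u₀ i, fun v hv hzero => ?_⟩
    have hexp : (∑ i, v i * (u i + k * u₀ i)) = (∑ i, v i * u i) + k * v j := by
      have : (∑ i, v i * (u i + k * u₀ i)) = (∑ i, v i * u i) + k * (∑ i, v i * u₀ i) := by
        rw [Finset.mul_sum, ← Finset.sum_add_distrib]
        exact Finset.sum_congr rfl fun i _ => by ring
      rw [this, hd]
    rw [hexp] at hzero
    by_cases hvj : v j = 0
    · rw [hvj, mul_zero, add_zero] at hzero
      rcases Finset.mem_insert.mp hv with rfl | hvS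
      · exact hj hvj
      · exact hu v hvS hzero
    · have hkv : k * v j = -(∑ i, v i * u i) := by linarith
      have : k = (-(∑ i, v i * u i)) / (v j) := by
        rw [← hkv, Int.mul_ediv_cancel k hvj]
      exact hk (Finset.mem_image.mpr ⟨v, hv, this.symm⟩)
lemma prod_zpow_eq {G : Type*} [CommGroup G] {ι : Type*} (a : G) (s : Finset ι) (k : ι → ℤ) :
    ∏ i ∈ s, a ^ k i = a ^ (∑ i ∈ s, k i) := by
  classical
  induction s using Finset.cons_induction with
  | empty => simp
  | cons j s hj ih => rw [Finset.prod_cons, Finset.sum_cons, ih, zpow_add]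

end Aux

/-- Every point of the hypersurface associated to the tropicalization of `f` is the
value of a zero of `f`:  `V(Tf) ⊆ TV(f)`. -/
theorem tropV_subset_tropicalVariety {Γ : Type*} [AddCommGroup Γ] [LinearOrder Γ] [IsOrderedAddMonoid Γ]
    {K : Type*} [Field K] [IsAlgClosed K] {N : ℕ}
    (val : K → WithTop Γ)
    (hval0 : ∀ x : K, val x = ⊤ ↔ x = 0)
    (hvalmul : ∀ x y : K, val (x * y) = val x + val y)
    (hvaladd : ∀ x y : K, min (val x) (val y) ≤ val (x + y))
    (hvalsurj : ∀ g : Γ, ∃ a : K, val a = WithTop.some g)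
    (f : AddMonoidAlgebra K (Fin N → ℤ)) (hf : f ≠ 0)
    (γ : Fin N → Γ) (hγ : γ ∈ tropV val f) :
    ∃ x : Fin N → Kˣ, lEval f x = 0 ∧ ∀ i, val (x i : K) = WithTop.some (γ i) := by
    classical
  obtain ⟨α₁, α₂, hne, ⟨hα₁s, hα₁e⟩, ⟨hα₂s, hα₂e⟩⟩ := hγ
  -- Step A : separating direction u
  set S : Finset (Fin N → ℤ) :=
    ((f.coeff.support ×ˢ f.coeff.support).filter (fun p => p.1 ≠ p.2)).image (fun p => p.1 - p.2) with hSdef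
  have hS0 : ∀ v ∈ S, v ≠ 0 := by
    intro v hv
    obtain ⟨p, hp, rfl⟩ := Finset.mem_image.mp hv
    exact sub_ne_zero_of_ne (Finset.mem_filter.mp hp).2
  obtain ⟨u, hu⟩ := exists_separating S hS0
  set e : (Fin N → ℤ) → ℤ := fun α => ∑ i, α i * u i with hedef
  have einj : ∀ α ∈ f.coeff.support, ∀ β ∈ f.coeff.support, α ≠ β → e α ≠ e β := by
    intro α hα β hβ hab heq
    have hmem : α - β ∈ S := Finset.mem_image.mpr
      ⟨(α, β), Finset.mem_filter.mpr ⟨Finset.mem_product.mpr ⟨hα, hβ⟩, hab⟩, rfl⟩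
    refine hu (α - β) hmem ?_
    have : (∑ i, (α - β) i * u i) = e α - e β := by
      rw [hedef]
      simp only [Pi.sub_apply, sub_mul]
      rw [Finset.sum_sub_distrib]
    rw [this, heq, sub_self]
  -- Step B : lift γ
  choose c hc using fun i => hvalsurj (γ i)
  have hc0 : ∀ i, c i ≠ 0 := by
    intro i h
    have := hc i
    rw [h, (hval0 0).mpr rfl] at this
    exact (WithTop.coe_ne_top (a := γ i)) this.symm
  set cu : Fin N → Kˣ := fun i => Units.mk0 (c i) (hc0 i) with hcudef
  -- Step C : coefficients
  set coef : (Fin N → ℤ) → K := fun α => f.coeff α * ((∏ i, (cu i) ^ (α i) : Kˣ) : K) with hcoefdef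
  have valcoef : ∀ α : Fin N → ℤ, val (coef α) = val (f.coeff α) + WithTop.some (tropDot α γ) := by
    intro α
    rw [hcoefdef]
    simp only []
    rw [hvalmul]
    congr 1
    have hcast : ((∏ i, (cu i) ^ (α i) : Kˣ) : K) = ∏ i, ((cu i ^ (α i) : Kˣ) : K) := by
      push_cast
      rfl
    rw [hcast, val_prod' val hval0 hvalmul]
    have : ∀ i, val ((cu i ^ (α i) : Kˣ) : K) = WithTop.some (α i • γ i) := by
      intro i
      exact val_unit_zpow' val hval0 hvalmul (cu i) (by rw [hcudef]; exact hc i) (α i)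
    rw [Finset.sum_congr rfl (fun i _ => this i)]
    rw [tropDot, WithTop.coe_sum]
  have hcoef0 : ∀ α ∈ f.coeff.support, coef α ≠ 0 := by
    intro α hα h
    rcases mul_eq_zero.mp h with h' | h'
    · exact Finsupp.mem_support_iff.mp hα h'
    · exact Units.ne_zero _ h'
  -- Step D : shift exponent
  have hsuppne : f.coeff.support.Nonempty := Finsupp.support_nonempty_iff.mpr (AddMonoidAlgebra.coeff_eq_zero.not.mpr hf)
  set m : ℤ := f.coeff.support.inf' hsuppne e with hmdef
  have hm : ∀ α ∈ f.coeff.support, m ≤ e α := fun α hα => Finset.inf'_le e hα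
  set d : (Fin N → ℤ) → ℕ := fun α => (e α - m).toNat with hddef
  have hd : ∀ α ∈ f.coeff.support, (d α : ℤ) = e α - m := by
    intro α hα
    rw [hddef]
    exact Int.toNat_of_nonneg (by linarith [hm α hα])
  have dinj : ∀ α ∈ f.coeff.support, ∀ β ∈ f.coeff.support, α ≠ β → d α ≠ d β := by
    intro α hα β hβ hab h
    refine einj α hα β hβ hab ?_
    have h2 : ((d α : ℕ) : ℤ) = ((d β : ℕ) : ℤ) := by exact_mod_cast congrArg (fun n : ℕ => (n : ℤ)) h
    rw [hd α hα, hd β hβ] at h2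
    linarith
  -- Step E : the one-variable polynomial
  set q : Polynomial K := ∑ α ∈ f.coeff.support, Polynomial.C (coef α) * Polynomial.X ^ (d α) with hqdef
  have hqcoeff : ∀ n : ℕ, q.coeff n = ∑ α ∈ f.coeff.support, if n = d α then coef α else 0 := by
    intro n
    rw [hqdef, Polynomial.finset_sum_coeff]
    refine Finset.sum_congr rfl fun α hα => ?_
    rw [Polynomial.coeff_C_mul, Polynomial.coeff_X_pow]
    split_ifs <;> simp
  have hqc : ∀ α ∈ f.coeff.support, q.coeff (d α) = coef α := by
    intro α hα
    rw [hqcoeff]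
    rw [Finset.sum_eq_single α]
    · simp
    · intro β hβ hba
      rw [if_neg]
      intro h
      exact dinj β hβ α hα hba (h.symm)
    · intro h
      exact absurd hα (by simpa using h)
  set T := tropicalize val f γ with hTdef
  have hTle : ∀ n : ℕ, T ≤ val (q.coeff n) := by
    intro n
    rw [hqcoeff]
    refine le_val_sum' val hval0 hvaladd ?_
    intro β hβ
    split_ifs with h
    · rw [valcoef β]
      exact Finset.inf_le hβ
    · rw [(hval0 0).mpr rfl]
      exact le_top
  have hq1 : val (q.coeff (d α₁)) = T := by rw [hqc α₁ hα₁s, valcoef, hTdef]; exact hα₁e.symm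
  have hq2 : val (q.coeff (d α₂)) = T := by rw [hqc α₂ hα₂s, valcoef, hTdef]; exact hα₂e.symm
  obtain ⟨r, hr0, hrval⟩ := exists_root_val_zero' val hval0 hvalmul hvaladd q
    (dinj α₁ hα₁s α₂ hα₂s hne)
    (fun j => by rw [hq1]; exact hTle j)
    (fun j => by rw [hq2]; exact hTle j)
    (by rw [hqc α₁ hα₁s]; exact hcoef0 α₁ hα₁s)
  have hrne : r ≠ 0 := by
    intro h
    rw [h, (hval0 0).mpr rfl] at hrval
    exact (WithTop.coe_ne_top (a := (0 : Γ))) hrval.symm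
  set ru : Kˣ := Units.mk0 r hrne with hrudef
  refine ⟨fun i => cu i * ru ^ (u i), ?_, ?_⟩
  · -- evaluation is zero
    rw [lEval]
    have key : ∀ α ∈ f.coeff.support,
        f.coeff α * ((∏ i, (cu i * ru ^ (u i)) ^ (α i) : Kˣ) : K)
          = ((ru ^ m : Kˣ) : K) * (coef α * r ^ (d α)) := by
      intro α hα
      have hsplit : (∏ i, (cu i * ru ^ (u i)) ^ (α i) : Kˣ)
          = (∏ i, (cu i) ^ (α i)) * ru ^ (e α) := by
        calc (∏ i, (cu i * ru ^ (u i)) ^ (α i) : Kˣ)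
            = ∏ i, ((cu i) ^ (α i) * (ru ^ (u i)) ^ (α i)) :=
              Finset.prod_congr rfl fun i _ => mul_zpow _ _ _
          _ = (∏ i, (cu i) ^ (α i)) * ∏ i, (ru ^ (u i)) ^ (α i) := Finset.prod_mul_distrib
          _ = (∏ i, (cu i) ^ (α i)) * ru ^ (e α) := by
              congr 1
              have h1 : ∀ i : Fin N, (ru ^ (u i)) ^ (α i) = ru ^ (u i * α i) :=
                fun i => (zpow_mul ru (u i) (α i)).symm
              rw [Finset.prod_congr rfl fun i _ => h1 i, prod_zpow_eq]
              congr 1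
              rw [hedef]
              exact Finset.sum_congr rfl fun i _ => mul_comm _ _
      have hz : ru ^ (e α) = ru ^ m * ru ^ ((d α : ℕ) : ℤ) := by
        have h2 : e α = m + ((d α : ℕ) : ℤ) := by rw [hd α hα]; ring
        rw [← zpow_add, ← h2]
      rw [hsplit, hz, hcoefdef]
      simp only [zpow_natCast]
      push_cast
      rw [show (ru : K) = r from rfl]
      ring
    rw [Finset.sum_congr rfl key, ← Finset.mul_sum]
    have heval : q.eval r = ∑ α ∈ f.coeff.support, coef α * r ^ (d α) := by
      rw [hqdef, Polynomial.eval_finset_sum]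
      exact Finset.sum_congr rfl fun α hα => by
        rw [Polynomial.eval_mul, Polynomial.eval_C, Polynomial.eval_pow, Polynomial.eval_X]
    rw [← heval, hr0, mul_zero]
  · intro i
    have h1 : val ((cu i : K)) = WithTop.some (γ i) := hc i
    have h2 : val ((ru ^ (u i) : Kˣ) : K) = WithTop.some ((u i) • (0 : Γ)) :=
      val_unit_zpow' val hval0 hvalmul ru (by rw [hrudef]; exact hrval) (u i)
    have : ((cu i * ru ^ (u i) : Kˣ) : K) = (cu i : K) * ((ru ^ (u i) : Kˣ) : K) := by
      push_cast; rfl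
    rw [this, hvalmul, h1, h2, smul_zero, ← WithTop.coe_add, add_zero]
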